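/- The centre of the pure braid group PBr₃ is generated by (a·b·a)²: an element z of PBr₃ = ker ρ commutes with every element of PBr₃ if and only if z is an integer power of (a·b·a)². In particular (a·b·a)² lies in the centre of PBr₃. -/

import Mathlib

/-- The single braid relation `a·b·a·(b·a·b)⁻¹` on two generators. -/
def braidRels : Set (FreeGroup (Fin 2)) :=
  {FreeGroup.of 0 * FreeGroup.of 1 * FreeGroup.of 0 *
    (FreeGroup.of 1 * FreeGroup.of 0 * FreeGroup.of 1)⁻¹}

/-- The braid group on three strings, `Br₃ = ⟨a, b | a·b·a = b·a·b⟩`. -/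
abbrev Br3 : Type := PresentedGroup braidRels

/-- The first generator `a` of `Br₃`. -/
def braidA : Br3 := PresentedGroup.of 0

/-- The second generator `b` of `Br₃`. -/
def braidB : Br3 := PresentedGroup.of 1

/-- The images `σ = (swap 0 1, swap 1 2)` of the generators in `Sym₃`. -/
def braidSigma : Fin 2 → Equiv.Perm (Fin 3) := ![Equiv.swap 0 1, Equiv.swap 1 2]

theorem braidRels_hold : ∀ r ∈ braidRels, FreeGroup.lift braidSigma r = 1 := by
  intro r hr
  rw [braidRels, Set.mem_singleton_iff] at hr
  subst hr
  simp only [map_mul, map_inv, FreeGroup.lift_apply_of, braidSigma, Matrix.cons_val_zero,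
    Matrix.cons_val_one, Matrix.head_cons]
  decide

/-- The natural homomorphism `ρ : Br₃ → Sym₃` sending `a ↦ (0 1)` and `b ↦ (1 2)`. -/
def braidRho : Br3 →* Equiv.Perm (Fin 3) := PresentedGroup.toGroup braidRels_hold

open Pointwise in
theorem _dummy_open : True := trivial

local notation "SL2" => Matrix.SpecialLinearGroup (Fin 2) ℤ

abbrev IrrR : Type := {x : ℝ // Irrational x}

theorem moeb_den_ne (a b c d : ℤ) (h : a * d - b * c = 1) {x : ℝ} (hx : Irrational x) :
    (c : ℝ) * x + (d : ℝ) ≠ 0 := by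
  intro h0
  rcases eq_or_ne c 0 with hc | hc
  · subst hc
    simp only [Int.cast_zero, zero_mul, zero_add] at h0
    have hd : d = 0 := by exact_mod_cast h0
    subst hd; simp at h
  · apply hx
    refine ⟨(-d : ℚ) / (c : ℚ), ?_⟩
    have hc' : (c : ℝ) ≠ 0 := Int.cast_ne_zero.mpr hc
    push_cast
    field_simp
    linarith

theorem moeb_irrational (a b c d : ℤ) (h : a * d - b * c = 1) {x : ℝ} (hx : Irrational x) :
    Irrational (((a : ℝ) * x + b) / ((c : ℝ) * x + d)) := by
  have hden := moeb_den_ne a b c d h hx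
  rintro ⟨q, hq⟩
  rw [eq_div_iff hden] at hq
  -- hq : q * (c x + d) = a x + b
  by_cases hqc : (a : ℚ) - q * c = 0
  · have ha : (a : ℝ) = (q : ℝ) * c := by
      have := congrArg (fun t : ℚ => (t : ℝ)) hqc
      push_cast at this
      linarith
    have hb : (b : ℝ) = (q : ℝ) * d := by linear_combination (-x) * ha - hq
    have hb' : (b : ℚ) = q * d := by
      apply (Rat.cast_injective (α := ℝ))
      push_cast
      exact hb
    have ha' : (a : ℚ) = q * c := by linarith [hqc]
    have : (a : ℚ) * d - b * c = 1 := by exact_mod_cast h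
    rw [ha', hb'] at this
    ring_nf at this
    simp at this
  · apply hx
    refine ⟨(q * d - b) / ((a : ℚ) - q * c), ?_⟩
    have hne : ((a : ℚ) - q * c : ℚ) ≠ 0 := hqc
    have hne' : ((a : ℝ) - (q : ℝ) * c) ≠ 0 := by
      intro h0
      apply hne
      apply (Rat.cast_injective (α := ℝ))
      push_cast
      linarith
    push_cast
    rw [div_eq_iff hne']
    nlinarith [hq]

theorem SL2_det_entries (M : SL2) :
    (M : Matrix (Fin 2) (Fin 2) ℤ) 0 0 * (M : Matrix (Fin 2) (Fin 2) ℤ) 1 1 -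
      (M : Matrix (Fin 2) (Fin 2) ℤ) 0 1 * (M : Matrix (Fin 2) (Fin 2) ℤ) 1 0 = 1 := by
  have := M.prop
  rwa [Matrix.det_fin_two] at this

noncomputable instance : SMul SL2 IrrR :=
  ⟨fun M x => ⟨(((M : Matrix (Fin 2) (Fin 2) ℤ) 0 0 : ℝ) * x + ((M : Matrix (Fin 2) (Fin 2) ℤ) 0 1 : ℝ)) /
      (((M : Matrix (Fin 2) (Fin 2) ℤ) 1 0 : ℝ) * x + ((M : Matrix (Fin 2) (Fin 2) ℤ) 1 1 : ℝ)),
    moeb_irrational _ _ _ _ (SL2_det_entries M) x.prop⟩⟩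

theorem smul_coe (M : SL2) (x : IrrR) :
    ((M • x : IrrR) : ℝ) =
      (((M : Matrix (Fin 2) (Fin 2) ℤ) 0 0 : ℝ) * x + ((M : Matrix (Fin 2) (Fin 2) ℤ) 0 1 : ℝ)) /
      (((M : Matrix (Fin 2) (Fin 2) ℤ) 1 0 : ℝ) * x + ((M : Matrix (Fin 2) (Fin 2) ℤ) 1 1 : ℝ)) := rfl

noncomputable instance : MulAction SL2 IrrR where
  one_smul x := by
    apply Subtype.ext
    rw [smul_coe]
    simp
  mul_smul M N x := by
    apply Subtype.ext
    rw [smul_coe, smul_coe, smul_coe]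
    have hN := moeb_den_ne _ _ _ _ (SL2_det_entries N) x.prop
    have hMN := moeb_den_ne _ _ _ _ (SL2_det_entries (M * N)) x.prop
    have hM := moeb_den_ne _ _ _ _ (SL2_det_entries M) (N • x : IrrR).prop
    rw [smul_coe] at hM
    have hmul : ∀ i j, ((M * N : SL2) : Matrix (Fin 2) (Fin 2) ℤ) i j =
        (M : Matrix (Fin 2) (Fin 2) ℤ) i 0 * (N : Matrix (Fin 2) (Fin 2) ℤ) 0 j +
        (M : Matrix (Fin 2) (Fin 2) ℤ) i 1 * (N : Matrix (Fin 2) (Fin 2) ℤ) 1 j := by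
      intro i j
      rw [Matrix.SpecialLinearGroup.coe_mul, Matrix.mul_apply, Fin.sum_univ_two]
    simp only [hmul] at hMN ⊢
    push_cast at hMN hM hN ⊢
    rw [div_eq_div_iff hMN hM]
    field_simp
    ring

def matS : SL2 := ⟨!![0, 1; -1, 0], by simp [Matrix.det_fin_two]⟩
def matB : SL2 := ⟨!![0, 1; -1, 1], by simp [Matrix.det_fin_two]⟩
def matP : SL2 := matS * matB
def matQ : SL2 := matB * matS

noncomputable def PsiSL : SL2 →* Equiv.Perm IrrR := MulAction.toPermHom SL2 IrrR

theorem psi_apply (M : SL2) (x : IrrR) : PsiSL M x = M • x := rfl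

theorem act_eq_one_of_pm (M : SL2) (h : (M : Matrix (Fin 2) (Fin 2) ℤ) = 1 ∨
    (M : Matrix (Fin 2) (Fin 2) ℤ) = -1) : PsiSL M = 1 := by
  apply Equiv.ext
  intro x
  show PsiSL M x = x
  rw [psi_apply]
  have hx : ((M • x : IrrR) : ℝ) = (x : ℝ) := by
    rw [smul_coe]
    rcases h with h | h <;> rw [h] <;>
      simp [Matrix.one_apply]
  exact Subtype.ext hx

theorem neg_one_fin_two : (-1 : Matrix (Fin 2) (Fin 2) ℤ) = !![-1, 0; 0, -1] := by
  rw [Matrix.one_fin_two]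
  norm_num

theorem matrix_braid : matP * matQ * matP = matQ * matP * matQ := by
  apply Subtype.ext
  simp only [matP, matQ, matS, matB, Matrix.SpecialLinearGroup.coe_mul]
  erw [Matrix.SpecialLinearGroup.coe_mul, Matrix.SpecialLinearGroup.coe_mul]
  norm_num [Matrix.mul_fin_two]

theorem matP_sq : ((matP ^ 2 : SL2) : Matrix (Fin 2) (Fin 2) ℤ) = !![1, -2; 0, 1] := by
  rw [sq]
  simp only [matP, matS, matB, Matrix.SpecialLinearGroup.coe_mul]
  erw [Matrix.SpecialLinearGroup.coe_mul]
  norm_num [Matrix.mul_fin_two]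

theorem matQ_sq : ((matQ ^ 2 : SL2) : Matrix (Fin 2) (Fin 2) ℤ) = !![1, 0; 2, 1] := by
  rw [sq]
  simp only [matQ, matS, matB, Matrix.SpecialLinearGroup.coe_mul]
  erw [Matrix.SpecialLinearGroup.coe_mul]
  norm_num [Matrix.mul_fin_two]

theorem matS_sq : ((matS ^ 2 : SL2) : Matrix (Fin 2) (Fin 2) ℤ) = -1 := by
  rw [sq, neg_one_fin_two]
  simp only [matS, Matrix.SpecialLinearGroup.coe_mul]
  erw [Matrix.SpecialLinearGroup.coe_mul]
  norm_num [Matrix.mul_fin_two]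

theorem matB_cube : ((matB ^ 3 : SL2) : Matrix (Fin 2) (Fin 2) ℤ) = -1 := by
  rw [pow_succ, pow_succ, pow_one, neg_one_fin_two]
  simp only [matB, Matrix.SpecialLinearGroup.coe_mul]
  erw [Matrix.SpecialLinearGroup.coe_mul, Matrix.SpecialLinearGroup.coe_mul]
  norm_num [Matrix.mul_fin_two]

theorem matB_sq : ((matB ^ 2 : SL2) : Matrix (Fin 2) (Fin 2) ℤ) = !![-1, 1; -1, 0] := by
  rw [sq]
  simp only [matB, Matrix.SpecialLinearGroup.coe_mul]
  erw [Matrix.SpecialLinearGroup.coe_mul]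
  norm_num [Matrix.mul_fin_two]

theorem cent_lemma (g : Matrix (Fin 2) (Fin 2) ℤ) (hdet : g.det = 1)
    (h1 : g * !![1, -2; 0, 1] = !![1, -2; 0, 1] * g)
    (h2 : g * !![1, 0; 2, 1] = !![1, 0; 2, 1] * g) : g = 1 ∨ g = -1 := by
  have e1 := Matrix.ext_iff.mpr h1
  have e2 := Matrix.ext_iff.mpr h2
  have e100 := e1 0 0
  have e101 := e1 0 1
  have e200 := e2 0 0
  simp [Matrix.mul_apply, Fin.sum_univ_two] at e100 e101 e200
  rw [Matrix.det_fin_two] at hdet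
  have hr : g 1 0 = 0 := by omega
  have hq : g 0 1 = 0 := by omega
  have hps : g 0 0 = g 1 1 := by omega
  have hp2 : g 0 0 * g 0 0 = 1 := by rw [hq, hr, ← hps] at hdet; omega
  rcases Int.mul_eq_one_iff_eq_one_or_neg_one.mp hp2 with ⟨h, -⟩ | ⟨h, -⟩
  · left
    rw [Matrix.eta_fin_two g, hq, hr, ← hps, h, Matrix.one_fin_two]
  · right
    rw [Matrix.eta_fin_two g, hq, hr, ← hps, h, neg_one_fin_two]

-- ## cyclic group homs
def zmodHom (n : ℕ) {K : Type} [Group K] (k : K) (hk : k ^ n = 1) :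
    Multiplicative (ZMod n) →* K :=
  AddMonoidHom.toMultiplicativeLeft <| ZMod.lift n ⟨MonoidHom.toAdditiveRight (zpowersHom K k), by
    simp [zpow_natCast, hk]⟩

theorem zmodHom_gen (n : ℕ) {K : Type} [Group K] (k : K) (hk : k ^ n = 1) :
    zmodHom n k hk (Multiplicative.ofAdd (1 : ZMod n)) = k := by
  have h : zmodHom n k hk (Multiplicative.ofAdd (((1 : ℤ) : ZMod n))) = k := by
    rw [zmodHom]
    simp only [AddMonoidHom.toMultiplicativeLeft_apply_apply, toAdd_ofAdd, ZMod.lift_coe]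
    simp
  simpa using h

-- ## the free product Z/2 * Z/3
def Hf : Bool → Type
  | false => Multiplicative (ZMod 2)
  | true => Multiplicative (ZMod 3)

instance Hf_group : ∀ b, Group (Hf b)
  | false => inferInstanceAs (Group (Multiplicative (ZMod 2)))
  | true => inferInstanceAs (Group (Multiplicative (ZMod 3)))

instance : DecidableEq (Hf false) := inferInstanceAs (DecidableEq (Multiplicative (ZMod 2)))
instance : DecidableEq (Hf true) := inferInstanceAs (DecidableEq (Multiplicative (ZMod 3)))
instance : Fintype (Hf true) := inferInstanceAs (Fintype (Multiplicative (ZMod 3)))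
instance : Fintype (Hf false) := inferInstanceAs (Fintype (Multiplicative (ZMod 2)))

def genX : Hf false := Multiplicative.ofAdd (1 : ZMod 2)
def genY : Hf true := Multiplicative.ofAdd (1 : ZMod 3)

theorem genX_sq : genX * genX = 1 := by decide
theorem genY_cube : genY * genY * genY = 1 := by decide

abbrev GG : Type := Monoid.CoprodI Hf

def ggX : GG := Monoid.CoprodI.of genX
def ggY : GG := Monoid.CoprodI.of genY

theorem ggX_sq : ggX * ggX = 1 := by
  rw [ggX, ← map_mul, genX_sq, map_one]

theorem ggY_cube : ggY * ggY * ggY = 1 := by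
  rw [ggY, ← map_mul, ← map_mul, genY_cube, map_one]

-- ## ping pong
def XPP : Bool → Set IrrR
  | false => {x | (x : ℝ) < 0}
  | true => {x | 0 < (x : ℝ)}

theorem hS2 : (PsiSL matS) ^ 2 = 1 := by
  rw [← map_pow]
  exact act_eq_one_of_pm _ (Or.inr matS_sq)

theorem hB3 : (PsiSL matB) ^ 3 = 1 := by
  rw [← map_pow]
  exact act_eq_one_of_pm _ (Or.inr matB_cube)

noncomputable def fPP : ∀ b, Hf b →* Equiv.Perm IrrR
  | false => zmodHom 2 (PsiSL matS) hS2
  | true => zmodHom 3 (PsiSL matB) hB3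

theorem z2_cases : ∀ h : Hf false, h = 1 ∨ h = genX := by decide
theorem z3_cases : ∀ h : Hf true, h = 1 ∨ h = genY ∨ h = genY * genY := by decide

theorem fPP_false_genX : fPP false genX = PsiSL matS := zmodHom_gen 2 _ hS2
theorem fPP_true_genY : fPP true genY = PsiSL matB := zmodHom_gen 3 _ hB3

theorem matS_coe : ((matS : SL2) : Matrix (Fin 2) (Fin 2) ℤ) = !![0, 1; -1, 0] := rfl
theorem matB_coe : ((matB : SL2) : Matrix (Fin 2) (Fin 2) ℤ) = !![0, 1; -1, 1] := rfl
theorem matBB_coe : ((matB * matB : SL2) : Matrix (Fin 2) (Fin 2) ℤ) = !![-1, 1; -1, 0] := by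
  rw [← sq]; exact matB_sq

theorem XPP_nonempty : ∀ b, (XPP b).Nonempty := by
  intro b
  have h2 : (0 : ℝ) < Real.sqrt 2 := Real.sqrt_pos.mpr (by norm_num)
  cases b
  · exact ⟨⟨-Real.sqrt 2, irrational_sqrt_two.neg⟩, by simpa [XPP] using h2⟩
  · exact ⟨⟨Real.sqrt 2, irrational_sqrt_two⟩, by simpa [XPP] using h2⟩

theorem XPP_disj : Pairwise (Function.onFun Disjoint XPP) := by
  intro i j hij
  match i, j with
  | false, false => exact absurd rfl hij
  | true, true => exact absurd rfl hij
  | false, true =>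
      apply Set.disjoint_left.mpr
      intro x hx hx'
      simp only [XPP, Set.mem_setOf_eq] at hx hx'
      linarith
  | true, false =>
      apply Set.disjoint_left.mpr
      intro x hx hx'
      simp only [XPP, Set.mem_setOf_eq] at hx hx'
      linarith

open Pointwise in
theorem hpp : Pairwise fun i j => ∀ h : Hf i, h ≠ 1 → fPP i h • XPP j ⊆ XPP i := by
  intro i j hij
  match i, j with
  | false, false => exact absurd rfl hij
  | true, true => exact absurd rfl hij
  | false, true =>
      intro h hne
      rcases z2_cases h with rfl | rfl
      · exact absurd rfl hne
      rw [fPP_false_genX]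
      rintro q ⟨p, hp, rfl⟩
      simp only [XPP, Set.mem_setOf_eq] at hp ⊢
      have : (PsiSL matS • p) = matS • p := rfl
      rw [this, smul_coe, matS_coe]
      norm_num
      exact hp
  | true, false =>
      intro h hne
      rcases z3_cases h with rfl | rfl | rfl
      · exact absurd rfl hne
      · rw [fPP_true_genY]
        rintro q ⟨p, hp, rfl⟩
        simp only [XPP, Set.mem_setOf_eq] at hp ⊢
        have : (PsiSL matB • p) = matB • p := rfl
        rw [this, smul_coe, matB_coe]
        norm_num
        linarith
      · rw [map_mul, fPP_true_genY]
        rintro q ⟨p, hp, rfl⟩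
        simp only [XPP, Set.mem_setOf_eq] at hp ⊢
        have h1 : ((PsiSL matB * PsiSL matB) • p) = matB • (matB • p) := rfl
        rw [h1, ← mul_smul, smul_coe, matBB_coe]
        norm_num
        apply div_pos <;> [skip; skip] <;> linarith

theorem hcardGG : 3 ≤ Cardinal.mk Bool ∨ ∃ i, 3 ≤ Cardinal.mk (Hf i) := by
  right
  refine ⟨true, ?_⟩
  have h : Fintype.card (Hf true) = 3 := rfl
  rw [Cardinal.mk_fintype, h]
  norm_num

noncomputable def thetaGG : GG →* Equiv.Perm IrrR := Monoid.CoprodI.lift fPP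

theorem theta_inj : Function.Injective thetaGG :=
  Monoid.CoprodI.lift_injective_of_ping_pong fPP hcardGG XPP XPP_nonempty XPP_disj hpp

theorem braid_rel : braidA * braidB * braidA = braidB * braidA * braidB := by
  have h : PresentedGroup.mk braidRels (FreeGroup.of 0 * FreeGroup.of 1 * FreeGroup.of 0 *
      (FreeGroup.of 1 * FreeGroup.of 0 * FreeGroup.of 1)⁻¹) = 1 := by
    apply (QuotientGroup.eq_one_iff _).mpr
    exact Subgroup.subset_normalClosure rfl
  have h2 : braidA * braidB * braidA * (braidB * braidA * braidB)⁻¹ = 1 := by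
    simpa [braidA, braidB, PresentedGroup.of, map_mul, map_inv] using h
  exact mul_inv_eq_one.mp h2

theorem delta_sq_eq : (braidA * braidB * braidA) ^ 2 = (braidA * braidB) ^ 3 := by
  rw [sq]
  nth_rewrite 2 [braid_rel]
  simp [pow_succ, mul_assoc]

theorem ab3_eq_ba3 : (braidA * braidB) ^ 3 = (braidB * braidA) ^ 3 := by
  calc (braidA * braidB) ^ 3 = (braidA * braidB * braidA) * (braidB * braidA * braidB) := by simp [pow_succ, mul_assoc]
    _ = (braidB * braidA * braidB) * (braidB * braidA * braidB) := by rw [braid_rel]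
    _ = (braidB * braidA * braidB) * (braidA * braidB * braidA) := by rw [braid_rel]
    _ = (braidB * braidA) ^ 3 := by simp [pow_succ, mul_assoc]

theorem delta_central : ∀ g : Br3, Commute ((braidA * braidB * braidA) ^ 2) g := by
  have ca : Commute ((braidA * braidB * braidA) ^ 2) braidA := by
    show _ * _ = _ * _
    rw [delta_sq_eq]
    calc (braidA * braidB) ^ 3 * braidA = braidA * (braidB * braidA) ^ 3 := by simp [pow_succ, mul_assoc]
      _ = braidA * (braidA * braidB) ^ 3 := by rw [ab3_eq_ba3]
  have cb : Commute ((braidA * braidB * braidA) ^ 2) braidB := by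
    show _ * _ = _ * _
    rw [delta_sq_eq, ab3_eq_ba3]
    calc (braidB * braidA) ^ 3 * braidB = braidB * (braidA * braidB) ^ 3 := by simp [pow_succ, mul_assoc]
      _ = braidB * (braidB * braidA) ^ 3 := by rw [ab3_eq_ba3]
  intro g
  have hg : g ∈ Subgroup.centralizer {(braidA * braidB * braidA) ^ 2} := by
    have : (⊤ : Subgroup Br3) ≤ Subgroup.centralizer {(braidA * braidB * braidA) ^ 2} := by
      rw [← PresentedGroup.closure_range_of braidRels]
      apply (Subgroup.closure_le _).mpr
      rintro _ ⟨i, rfl⟩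
      rw [SetLike.mem_coe, Subgroup.mem_centralizer_iff]
      rintro x hx
      rw [Set.mem_singleton_iff] at hx
      subst hx
      fin_cases i
      · exact ca.eq
      · exact cb.eq
    exact this (Subgroup.mem_top g)
  rw [Subgroup.mem_centralizer_iff] at hg
  exact (hg _ (Set.mem_singleton _))

theorem ba_cubed : (braidB * braidA) ^ 3 = (braidA * braidB * braidA) ^ 2 := by
  rw [delta_sq_eq, ab3_eq_ba3]

-- ## homomorphism Br3 -> GG
def fGG : Fin 2 → GG := ![ggX * ggY, ggY * ggX]

theorem GG_rels_hold : ∀ r ∈ braidRels, FreeGroup.lift fGG r = 1 := by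
  intro r hr
  rw [braidRels, Set.mem_singleton_iff] at hr
  subst hr
  simp only [map_mul, map_inv, FreeGroup.lift_apply_of, fGG, Matrix.cons_val_zero, Matrix.cons_val_one,
    Matrix.head_cons]
  rw [mul_inv_eq_one]
  have hx : ∀ z : GG, ggX * (ggX * z) = z := fun z => by rw [← mul_assoc, ggX_sq, one_mul]
  have hy : ∀ z : GG, ggY * (ggY * (ggY * z)) = z := fun z => by
    rw [← mul_assoc, ← mul_assoc, ggY_cube, one_mul]
  have hy' : ggY * (ggY * ggY) = 1 := by rw [← mul_assoc]; exact ggY_cube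
  calc ggX * ggY * (ggY * ggX) * (ggX * ggY)
      = ggX * (ggY * (ggY * (ggX * (ggX * ggY)))) := by simp [mul_assoc]
    _ = ggX * (ggY * (ggY * ggY)) := by rw [hx]
    _ = ggX := by rw [hy', mul_one]
    _ = ggY * (ggY * (ggY * ggX)) := by rw [hy]
    _ = ggY * ggX * (ggX * ggY) * (ggY * ggX) := by
        have h : ggY * ggX * (ggX * ggY) * (ggY * ggX)
            = ggY * (ggX * (ggX * (ggY * (ggY * ggX)))) := by simp [mul_assoc]
        rw [h, hx]

def braidPi : Br3 →* GG := PresentedGroup.toGroup GG_rels_hold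

-- ## homomorphism Br3 -> SL2
def fSL : Fin 2 → SL2 := ![matP, matQ]

theorem SL_rels_hold : ∀ r ∈ braidRels, FreeGroup.lift fSL r = 1 := by
  intro r hr
  rw [braidRels, Set.mem_singleton_iff] at hr
  subst hr
  simp only [map_mul, map_inv, FreeGroup.lift_apply_of, fSL, Matrix.cons_val_zero, Matrix.cons_val_one,
    Matrix.head_cons]
  rw [mul_inv_eq_one, matrix_braid]

def braidPsi : Br3 →* SL2 := PresentedGroup.toGroup SL_rels_hold

-- ## quotient by the centre
instance zpowers_normal : (Subgroup.zpowers ((braidA * braidB * braidA) ^ 2)).Normal := by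
  constructor
  intro n hn g
  rw [Subgroup.mem_zpowers_iff] at hn
  obtain ⟨m, rfl⟩ := hn
  have h := ((delta_central g).zpow_left m).symm.eq
  rw [h, mul_inv_cancel_right]
  exact Subgroup.zpow_mem _ (Subgroup.mem_zpowers _) m

abbrev Br3Q : Type := Br3 ⧸ Subgroup.zpowers ((braidA * braidB * braidA) ^ 2)

def mkQ : Br3 →* Br3Q := QuotientGroup.mk' _

theorem mkQ_delta : mkQ (braidA * braidB * braidA) ^ 2 = 1 := by
  rw [← map_pow]
  exact (QuotientGroup.eq_one_iff _).mpr (Subgroup.mem_zpowers _)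

theorem mkQ_ba : mkQ ((braidB * braidA)⁻¹) ^ 3 = 1 := by
  rw [← map_pow, inv_pow, ba_cubed]
  exact (QuotientGroup.eq_one_iff _).mpr ((Subgroup.zpowers _).inv_mem (Subgroup.mem_zpowers _))

noncomputable def gTau : ∀ b, Hf b →* Br3Q
  | false => zmodHom 2 (mkQ (braidA * braidB * braidA)) mkQ_delta
  | true => zmodHom 3 (mkQ ((braidB * braidA)⁻¹)) mkQ_ba

noncomputable def braidTau : GG →* Br3Q := Monoid.CoprodI.lift gTau

theorem gTau_false : gTau false genX = mkQ (braidA * braidB * braidA) := zmodHom_gen 2 _ mkQ_delta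
theorem gTau_true : gTau true genY = mkQ ((braidB * braidA)⁻¹) := zmodHom_gen 3 _ mkQ_ba

theorem tau_pi : braidTau.comp braidPi = mkQ := by
  apply PresentedGroup.ext
  intro x
  fin_cases x
  · show braidTau (braidPi (PresentedGroup.of 0)) = mkQ (PresentedGroup.of 0)
    rw [braidPi, PresentedGroup.toGroup.of]
    show braidTau (ggX * ggY) = mkQ braidA
    rw [map_mul, ggX, ggY, braidTau, Monoid.CoprodI.lift_of, Monoid.CoprodI.lift_of,
      gTau_false, gTau_true, ← map_mul]
    congr 1
    group
  · show braidTau (braidPi (PresentedGroup.of 1)) = mkQ (PresentedGroup.of 1)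
    rw [braidPi, PresentedGroup.toGroup.of]
    show braidTau (ggY * ggX) = mkQ braidB
    rw [map_mul, ggX, ggY, braidTau, Monoid.CoprodI.lift_of, Monoid.CoprodI.lift_of,
      gTau_false, gTau_true, ← map_mul]
    congr 1
    nth_rewrite 1 [braid_rel]
    group

theorem psi_theta_pi : PsiSL.comp braidPsi = thetaGG.comp braidPi := by
  apply PresentedGroup.ext
  intro x
  fin_cases x
  · show PsiSL (braidPsi (PresentedGroup.of 0)) = thetaGG (braidPi (PresentedGroup.of 0))
    rw [braidPi, braidPsi, PresentedGroup.toGroup.of, PresentedGroup.toGroup.of]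
    show PsiSL (matP) = thetaGG (ggX * ggY)
    rw [map_mul, ggX, ggY, thetaGG, Monoid.CoprodI.lift_of, Monoid.CoprodI.lift_of,
      fPP_false_genX, fPP_true_genY, ← map_mul, matP]
  · show PsiSL (braidPsi (PresentedGroup.of 1)) = thetaGG (braidPi (PresentedGroup.of 1))
    rw [braidPi, braidPsi, PresentedGroup.toGroup.of, PresentedGroup.toGroup.of]
    show PsiSL (matQ) = thetaGG (ggY * ggX)
    rw [map_mul, ggX, ggY, thetaGG, Monoid.CoprodI.lift_of, Monoid.CoprodI.lift_of,
      fPP_false_genX, fPP_true_genY, ← map_mul, matQ]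

theorem rho_a : braidRho braidA = Equiv.swap 0 1 := by
  rw [braidA, braidRho, PresentedGroup.toGroup.of]; rfl

theorem rho_b : braidRho braidB = Equiv.swap 1 2 := by
  rw [braidB, braidRho, PresentedGroup.toGroup.of]; rfl

theorem ha2 : braidA ^ 2 ∈ braidRho.ker := by
  rw [MonoidHom.mem_ker, map_pow, rho_a]; decide

theorem hb2 : braidB ^ 2 ∈ braidRho.ker := by
  rw [MonoidHom.mem_ker, map_pow, rho_b]; decide

theorem psi_a : braidPsi braidA = matP := by
  rw [braidA, braidPsi, PresentedGroup.toGroup.of]; rfl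

theorem psi_b : braidPsi braidB = matQ := by
  rw [braidB, braidPsi, PresentedGroup.toGroup.of]; rfl

/-- The centre of the pure braid group `PBr₃ = ker ρ` is generated by `(a·b·a)²`:
an element of `PBr₃` commutes with every element of `PBr₃` if and only if it is an
integer power of `(a·b·a)²`.  In particular `(a·b·a)²` lies in the centre of `PBr₃`. -/
theorem center_pure_braid_group :
    ((braidA * braidB * braidA) ^ 2 ∈ braidRho.ker) ∧
    (∀ z : braidRho.ker, (∀ w : braidRho.ker, z * w = w * z) ↔
        ∃ m : ℤ, (z : Br3) = ((braidA * braidB * braidA) ^ 2) ^ m) := by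
  constructor
  · rw [MonoidHom.mem_ker, map_pow, map_mul, map_mul, rho_a, rho_b]
    decide
  intro z
  constructor
  · intro hz
    have hza : (z : Br3) * braidA ^ 2 = braidA ^ 2 * (z : Br3) :=
      congrArg Subtype.val (hz ⟨braidA ^ 2, ha2⟩)
    have hzb : (z : Br3) * braidB ^ 2 = braidB ^ 2 * (z : Br3) :=
      congrArg Subtype.val (hz ⟨braidB ^ 2, hb2⟩)
    have hA : braidPsi z * matP ^ 2 = matP ^ 2 * braidPsi z := by
      have h := congrArg braidPsi hza
      simpa [map_mul, map_pow, psi_a] using h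
    have hB : braidPsi z * matQ ^ 2 = matQ ^ 2 * braidPsi z := by
      have h := congrArg braidPsi hzb
      simpa [map_mul, map_pow, psi_b] using h
    have h1 : ((braidPsi z : SL2) : Matrix (Fin 2) (Fin 2) ℤ) * !![1, -2; 0, 1] =
        !![1, -2; 0, 1] * ((braidPsi z : SL2) : Matrix (Fin 2) (Fin 2) ℤ) := by
      have h := congrArg (fun M : SL2 => (M : Matrix (Fin 2) (Fin 2) ℤ)) hA
      simp only [Matrix.SpecialLinearGroup.coe_mul] at h
      rw [matP_sq] at h
      exact h
    have h2 : ((braidPsi z : SL2) : Matrix (Fin 2) (Fin 2) ℤ) * !![1, 0; 2, 1] =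
        !![1, 0; 2, 1] * ((braidPsi z : SL2) : Matrix (Fin 2) (Fin 2) ℤ) := by
      have h := congrArg (fun M : SL2 => (M : Matrix (Fin 2) (Fin 2) ℤ)) hB
      simp only [Matrix.SpecialLinearGroup.coe_mul] at h
      rw [matQ_sq] at h
      exact h
    have hcent := cent_lemma _ (braidPsi (z : Br3)).prop h1 h2
    have hone : PsiSL (braidPsi z) = 1 := act_eq_one_of_pm _ hcent
    have hth : thetaGG (braidPi z) = 1 := by
      have hc : PsiSL (braidPsi (z : Br3)) = thetaGG (braidPi (z : Br3)) := by
        rw [← MonoidHom.comp_apply, ← MonoidHom.comp_apply, psi_theta_pi]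
      rw [← hc]
      exact hone
    have hpi : braidPi (z : Br3) = 1 := theta_inj (by rw [hth, map_one])
    have hmk : mkQ (z : Br3) = 1 := by
      rw [← tau_pi, MonoidHom.comp_apply, hpi, map_one]
    have hmem : (z : Br3) ∈ Subgroup.zpowers ((braidA * braidB * braidA) ^ 2) :=
      (QuotientGroup.eq_one_iff _).mp hmk
    rw [Subgroup.mem_zpowers_iff] at hmem
    obtain ⟨m, hm⟩ := hmem
    exact ⟨m, hm.symm⟩
  · rintro ⟨m, hm⟩ w
    apply Subtype.ext
    show (z : Br3) * w = (w : Br3) * z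
    rw [hm]
    exact ((delta_central (w : Br3)).zpow_left m).eq
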